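/- Let d ≥ 1, let J : ℤ^d → [0,∞) satisfy J(0) = 0 and J(−y) = J(y), let R ≥ 1 be an integer, and let β ≥ 0. Define the periodised kernel J̄_R(y) = ∑_{u∈ℤ^d} J(y + Ru) for y ∈ 𝕋_R^d. Then for every x ∈ 𝕋_R^d, the torus self-avoiding-walk two-point function satisfies G_{R,β}(x) ≤ Γ_{R,β}(x), where Γ_{R,β}(x) = ∑_{x'∈ℤ^d : π(x')=x} G_β(x') and G_β, G_{R,β} are the self-avoiding-walk two-point functions on ℤ^d and 𝕋_R^d respectively, with all quantities valued in [0,∞]. -/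
import Mathlib


open scoped ENNReal NNReal BigOperators

/-- The natural projection `π : ℤ^d → 𝕋_R^d = (ℤ/Rℤ)^d`. -/
def torusProj {d : ℕ} (R : ℕ) (x : Fin d → ℤ) : Fin d → ZMod R :=
  fun i => (x i : ZMod R)

/-- The self-avoiding-walk two-point function with kernel `J` and activity `β`,
on an abelian group `V` (say `ℤ^d` or the torus `𝕋_R^d`):
`G_β(x) = ∑_{n≥0} β^n ∑_{ω : n-step SAW 0 → x} ∏_{i=1}^n J(ω(i)-ω(i-1))`,
with values in `[0,∞]`. -/
noncomputable def sawTwoPoint {V : Type*} [AddCommGroup V] (J : V → ℝ≥0∞) (β : ℝ≥0)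
    (x : V) : ℝ≥0∞ :=
  ∑' n : ℕ, (β : ℝ≥0∞) ^ n *
    ∑' ω : {ω : Fin (n + 1) → V //
        ω 0 = 0 ∧ ω (Fin.last n) = x ∧ Function.Injective ω},
      ∏ i : Fin n, J (ω.1 i.succ - ω.1 i.castSucc)

/-! ### Auxiliary lemmas -/

/-- A finite product of `tsum`s in `ℝ≥0∞` is a `tsum` over the dependent product. -/
lemma prod_tsum_eq : ∀ (n : ℕ) (T : Fin n → Type) (f : ∀ i, T i → ℝ≥0∞),
    (∏ i, ∑' a : T i, f i a) = ∑' g : (∀ i, T i), ∏ i, f i (g i)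
  | 0, T, f => by
    rw [tsum_eq_single (fun i : Fin 0 => i.elim0)
      (fun b hb => absurd (funext fun i => i.elim0) hb)]
    simp
  | (n+1), T, f => by
    rw [Fin.prod_univ_succ, prod_tsum_eq n (fun i => T i.succ) (fun i a => f i.succ a),
      ← Equiv.tsum_eq (Fin.consEquiv T) (fun g => ∏ i, f i (g i)), ENNReal.tsum_prod']
    have h : ∀ (a : T 0) (b : ∀ i : Fin n, T i.succ),
        (∏ i : Fin (n+1), f i ((Fin.consEquiv T) (a, b) i))
          = f 0 a * ∏ i : Fin n, f i.succ (b i) := by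
      intro a b
      rw [Fin.prod_univ_succ]
      simp [Fin.consEquiv]
    calc (∑' a : T 0, f 0 a) * ∑' g : (∀ i : Fin n, T i.succ), ∏ i, f i.succ (g i)
        = ∑' a : T 0, f 0 a * ∑' g : (∀ i : Fin n, T i.succ), ∏ i, f i.succ (g i) :=
          ENNReal.tsum_mul_right.symm
      _ = ∑' (a : T 0) (b : ∀ i : Fin n, T i.succ), f 0 a * ∏ i, f i.succ (b i) :=
          tsum_congr fun a => ENNReal.tsum_mul_left.symm
      _ = ∑' (a : T 0) (b : ∀ i : Fin n, T i.succ),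
            ∏ i : Fin (n+1), f i ((Fin.consEquiv T) (a, b) i) :=
          tsum_congr fun a => tsum_congr fun b => (h a b).symm

lemma torusProj_zero {d R : ℕ} : torusProj R (0 : Fin d → ℤ) = 0 := by
  funext i; simp [torusProj]

lemma torusProj_add {d R : ℕ} (a b : Fin d → ℤ) :
    torusProj R (a + b) = torusProj R a + torusProj R b := by
  funext i; simp [torusProj]

/-- The walk on `ℤ^d` with increments `z`. -/
def walkOf {d n : ℕ} (z : Fin n → (Fin d → ℤ)) : Fin (n+1) → (Fin d → ℤ) :=
  fun k => ∑ i : Fin n, if (i : ℕ) < (k : ℕ) then z i else 0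

lemma walkOf_zero {d n : ℕ} (z : Fin n → (Fin d → ℤ)) : walkOf z 0 = 0 := by
  simp [walkOf]

lemma walkOf_succ {d n : ℕ} (z : Fin n → (Fin d → ℤ)) (i : Fin n) :
    walkOf z i.succ = walkOf z i.castSucc + z i := by
  unfold walkOf
  have h : ∀ j : Fin n, (if (j : ℕ) < (i.succ : ℕ) then z j else 0)
      = (if (j : ℕ) < (i.castSucc : ℕ) then z j else 0) + (if j = i then z j else 0) := by
    intro j
    by_cases hj : j = i
    · subst hj
      simp [Fin.val_succ, Nat.lt_irrefl]
    · have hne : (j : ℕ) ≠ (i : ℕ) := fun h => hj (Fin.ext h)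
      have h2 : ((j : ℕ) < (i : ℕ) + 1) ↔ (j : ℕ) < (i : ℕ) := by omega
      simp [hj, Fin.val_succ, Fin.coe_castSucc, h2]
  rw [Finset.sum_congr rfl (fun j _ => h j), Finset.sum_add_distrib,
    Finset.sum_ite_eq' Finset.univ i]
  simp

lemma walkOf_diff {d n : ℕ} (z : Fin n → (Fin d → ℤ)) (i : Fin n) :
    walkOf z i.succ - walkOf z i.castSucc = z i := by
  rw [walkOf_succ]; exact add_sub_cancel_left _ _

lemma proj_walkOf {d R n : ℕ} (ω : Fin (n+1) → (Fin d → ZMod R)) (hω0 : ω 0 = 0)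
    (z : Fin n → (Fin d → ℤ))
    (hz : ∀ i, torusProj R (z i) = ω i.succ - ω i.castSucc) (k : Fin (n+1)) :
    torusProj R (walkOf z k) = ω k := by
  induction k using Fin.induction with
  | zero => rw [walkOf_zero, torusProj_zero, hω0]
  | succ i ih =>
      rw [walkOf_succ, torusProj_add, ih, hz]
      exact add_sub_cancel _ _

/-- Lift a torus SAW together with a choice of increment lifts to a `ℤ^d` SAW. -/
def liftMap {d R n : ℕ} (x : Fin d → ZMod R)
    (p : Σ ω : {ω : Fin (n+1) → (Fin d → ZMod R) //
          ω 0 = 0 ∧ ω (Fin.last n) = x ∧ Function.Injective ω},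
        ∀ i : Fin n, {z : Fin d → ℤ // torusProj R z = ω.1 i.succ - ω.1 i.castSucc}) :
    Σ x' : {x' : Fin d → ℤ // torusProj R x' = x},
      {σ : Fin (n+1) → (Fin d → ℤ) //
        σ 0 = 0 ∧ σ (Fin.last n) = x'.1 ∧ Function.Injective σ} :=
  ⟨⟨walkOf (fun i => (p.2 i).1) (Fin.last n), by
      rw [proj_walkOf p.1.1 p.1.2.1 _ (fun i => (p.2 i).2)]; exact p.1.2.2.1⟩,
   ⟨walkOf (fun i => (p.2 i).1), walkOf_zero _, rfl, fun a b hab =>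
      p.1.2.2.2 (by
        rw [← proj_walkOf p.1.1 p.1.2.1 _ (fun i => (p.2 i).2) a,
          ← proj_walkOf p.1.1 p.1.2.1 _ (fun i => (p.2 i).2) b, hab])⟩⟩

lemma liftMap_injective {d R n : ℕ} (x : Fin d → ZMod R) :
    Function.Injective (liftMap (d := d) (R := R) (n := n) x) := by
  rintro ⟨⟨ω1, h1⟩, g1⟩ ⟨⟨ω2, h2⟩, g2⟩ h
  have hσ : walkOf (fun i => (g1 i).1) = walkOf (fun i => (g2 i).1) :=
    congrArg (fun q => q.2.1) h
  have hω : ω1 = ω2 := by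
    funext k
    rw [← proj_walkOf ω1 h1.1 _ (fun i => (g1 i).2) k,
        ← proj_walkOf ω2 h2.1 _ (fun i => (g2 i).2) k, hσ]
  subst hω
  have hg : g1 = g2 := by
    funext i
    apply Subtype.ext
    have := congrArg (fun w : Fin (n+1) → (Fin d → ℤ) => w i.succ - w i.castSucc) hσ
    simpa only [walkOf_diff] using this
  subst hg
  rfl

/-- The torus SAW two-point function, defined with the periodised kernel
`J̄_R(y) = ∑_{z : π(z)=y} J(z) = ∑_u J(y+Ru)`, is bounded above by the unwrapped
two-point function `Γ_{R,β}(x) = ∑_{x' : π(x')=x} G_β(x')`. -/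
theorem torus_saw_le_unwrapped (d R : ℕ) (hd : 1 ≤ d) (hR : 1 ≤ R)
    (J : (Fin d → ℤ) → ℝ≥0) (hJ0 : J 0 = 0) (hJsym : ∀ y, J (-y) = J y)
    (β : ℝ≥0) (x : Fin d → ZMod R) :
    sawTwoPoint
        (fun y : Fin d → ZMod R =>
          ∑' z : {z : Fin d → ℤ // torusProj R z = y}, (J z.1 : ℝ≥0∞)) β x ≤
      ∑' x' : {x' : Fin d → ℤ // torusProj R x' = x},
        sawTwoPoint (fun z : Fin d → ℤ => (J z : ℝ≥0∞)) β x'.1 := by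
  classical
  have key : ∀ n : ℕ,
      (∑' ω : {ω : Fin (n+1) → (Fin d → ZMod R) //
            ω 0 = 0 ∧ ω (Fin.last n) = x ∧ Function.Injective ω},
          ∏ i : Fin n,
            ∑' z : {z : Fin d → ℤ // torusProj R z = ω.1 i.succ - ω.1 i.castSucc},
              (J z.1 : ℝ≥0∞))
        ≤ ∑' x' : {x' : Fin d → ℤ // torusProj R x' = x},
            ∑' σ : {σ : Fin (n+1) → (Fin d → ℤ) //
                σ 0 = 0 ∧ σ (Fin.last n) = x'.1 ∧ Function.Injective σ},
              ∏ i : Fin n, (J (σ.1 i.succ - σ.1 i.castSucc) : ℝ≥0∞) := by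
    intro n
    calc
      (∑' ω : {ω : Fin (n+1) → (Fin d → ZMod R) //
            ω 0 = 0 ∧ ω (Fin.last n) = x ∧ Function.Injective ω},
          ∏ i : Fin n,
            ∑' z : {z : Fin d → ℤ // torusProj R z = ω.1 i.succ - ω.1 i.castSucc},
              (J z.1 : ℝ≥0∞))
          = ∑' ω : {ω : Fin (n+1) → (Fin d → ZMod R) //
                ω 0 = 0 ∧ ω (Fin.last n) = x ∧ Function.Injective ω},
              ∑' g : (∀ i : Fin n,
                  {z : Fin d → ℤ // torusProj R z = ω.1 i.succ - ω.1 i.castSucc}),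
                ∏ i : Fin n, (J ((g i).1) : ℝ≥0∞) :=
        tsum_congr fun ω => prod_tsum_eq n _ _
      _ = ∑' p : (Σ ω : {ω : Fin (n+1) → (Fin d → ZMod R) //
              ω 0 = 0 ∧ ω (Fin.last n) = x ∧ Function.Injective ω},
              ∀ i : Fin n,
                {z : Fin d → ℤ // torusProj R z = ω.1 i.succ - ω.1 i.castSucc}),
            ∏ i : Fin n, (J ((p.2 i).1) : ℝ≥0∞) :=
        (ENNReal.tsum_sigma'
          (fun p : (Σ ω : {ω : Fin (n+1) → (Fin d → ZMod R) //
              ω 0 = 0 ∧ ω (Fin.last n) = x ∧ Function.Injective ω},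
              ∀ i : Fin n,
                {z : Fin d → ℤ // torusProj R z = ω.1 i.succ - ω.1 i.castSucc}) =>
            ∏ i : Fin n, (J ((p.2 i).1) : ℝ≥0∞))).symm
      _ = ∑' p : (Σ ω : {ω : Fin (n+1) → (Fin d → ZMod R) //
              ω 0 = 0 ∧ ω (Fin.last n) = x ∧ Function.Injective ω},
              ∀ i : Fin n,
                {z : Fin d → ℤ // torusProj R z = ω.1 i.succ - ω.1 i.castSucc}),
            ∏ i : Fin n,
              (J ((liftMap x p).2.1 i.succ - (liftMap x p).2.1 i.castSucc) : ℝ≥0∞) :=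
        tsum_congr fun p => Finset.prod_congr rfl fun i _ => by
          rw [show (liftMap x p).2.1 = walkOf (fun i => (p.2 i).1) from rfl, walkOf_diff]
      _ ≤ ∑' q : (Σ x' : {x' : Fin d → ℤ // torusProj R x' = x},
            {σ : Fin (n+1) → (Fin d → ℤ) //
              σ 0 = 0 ∧ σ (Fin.last n) = x'.1 ∧ Function.Injective σ}),
            ∏ i : Fin n, (J (q.2.1 i.succ - q.2.1 i.castSucc) : ℝ≥0∞) :=
        ENNReal.tsum_comp_le_tsum_of_injective (liftMap_injective x) _
      _ = ∑' x' : {x' : Fin d → ℤ // torusProj R x' = x},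
            ∑' σ : {σ : Fin (n+1) → (Fin d → ℤ) //
                σ 0 = 0 ∧ σ (Fin.last n) = x'.1 ∧ Function.Injective σ},
              ∏ i : Fin n, (J (σ.1 i.succ - σ.1 i.castSucc) : ℝ≥0∞) :=
        ENNReal.tsum_sigma'
          (fun q : (Σ x' : {x' : Fin d → ℤ // torusProj R x' = x},
            {σ : Fin (n+1) → (Fin d → ℤ) //
              σ 0 = 0 ∧ σ (Fin.last n) = x'.1 ∧ Function.Injective σ}) =>
            ∏ i : Fin n, (J (q.2.1 i.succ - q.2.1 i.castSucc) : ℝ≥0∞))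
  unfold sawTwoPoint
  calc
    (∑' n : ℕ, (β : ℝ≥0∞) ^ n *
        ∑' ω : {ω : Fin (n+1) → (Fin d → ZMod R) //
            ω 0 = 0 ∧ ω (Fin.last n) = x ∧ Function.Injective ω},
          ∏ i : Fin n,
            ∑' z : {z : Fin d → ℤ // torusProj R z = ω.1 i.succ - ω.1 i.castSucc},
              (J z.1 : ℝ≥0∞))
        ≤ ∑' n : ℕ, (β : ℝ≥0∞) ^ n *
            ∑' x' : {x' : Fin d → ℤ // torusProj R x' = x},
              ∑' σ : {σ : Fin (n+1) → (Fin d → ℤ) //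
                  σ 0 = 0 ∧ σ (Fin.last n) = x'.1 ∧ Function.Injective σ},
                ∏ i : Fin n, (J (σ.1 i.succ - σ.1 i.castSucc) : ℝ≥0∞) :=
      Summable.tsum_le_tsum (fun n => mul_le_mul_right (key n) _)
        ENNReal.summable ENNReal.summable
    _ = ∑' (n : ℕ) (x' : {x' : Fin d → ℤ // torusProj R x' = x}),
          (β : ℝ≥0∞) ^ n *
            ∑' σ : {σ : Fin (n+1) → (Fin d → ℤ) //
                σ 0 = 0 ∧ σ (Fin.last n) = x'.1 ∧ Function.Injective σ},
              ∏ i : Fin n, (J (σ.1 i.succ - σ.1 i.castSucc) : ℝ≥0∞) :=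
      tsum_congr fun n => ENNReal.tsum_mul_left.symm
    _ = ∑' (x' : {x' : Fin d → ℤ // torusProj R x' = x}) (n : ℕ),
          (β : ℝ≥0∞) ^ n *
            ∑' σ : {σ : Fin (n+1) → (Fin d → ℤ) //
                σ 0 = 0 ∧ σ (Fin.last n) = x'.1 ∧ Function.Injective σ},
              ∏ i : Fin n, (J (σ.1 i.succ - σ.1 i.castSucc) : ℝ≥0∞) :=
      ENNReal.tsum_comm
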